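/- arXiv:1701.04223 — 3 statements merged into one kernel-verified Lean document; each statement's English description precedes it below -/
import Mathlib

section
/- A triangle T of the idempotent completion Karoubi C belongs to the class Θ̃ if and only if its rotation T[1] = (T₂, T₃, T₁⟦1⟧; f₂, f₃, −f₁⟦1⟧) belongs to Θ̃. -/
open CategoryTheory CategoryTheory.Limits CategoryTheory.Pretriangulated
  CategoryTheory.Idempotents ZeroObject

variable (C : Type*) [Category C] [Preadditive C] [HasZeroObject C] [HasFiniteBiproducts C]
  [HasShift C ℤ] [∀ n : ℤ, (shiftFunctor C n).Additive] [Pretriangulated C]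

/-- The shift on the idempotent completion `Karoubi C` induced by the shift on `C`:
`(A, e)⟦n⟧ = (A⟦n⟧, e⟦n⟧)`. -/
noncomputable instance karoubiHasShift : HasShift (Karoubi C) ℤ :=
  HasShift.induced (toKaroubi C) ℤ
    (fun n => (functorExtension₂ C C).obj (shiftFunctor C n))
    (fun n => (functorExtension₂CompWhiskeringLeftToKaroubiIso C C).app (shiftFunctor C n))

/-- The functor `toKaroubi C` commutes with the shifts. -/
noncomputable instance toKaroubiCommShift : (toKaroubi C).CommShift ℤ :=
  Functor.CommShift.ofInduced (toKaroubi C) ℤ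
    (fun n => (functorExtension₂ C C).obj (shiftFunctor C n))
    (fun n => (functorExtension₂CompWhiskeringLeftToKaroubiIso C C).app (shiftFunctor C n))

noncomputable instance karoubiShiftAdditive (n : ℤ) :
    (shiftFunctor (Karoubi C) n).Additive := by
  change ((functorExtension₂ C C).obj (shiftFunctor C n)).Additive
  constructor
  intro X Y f g
  ext
  simp
  rfl

noncomputable instance : HasBinaryBiproducts (Karoubi C) :=
  hasBinaryBiproducts_of_finite_biproducts _

variable {C}

/-- The direct sum of two triangles: the triangle on the biproducts of the corresponding
objects, with the componentwise maps. -/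
noncomputable def triangleSum {D : Type*} [Category D] [Preadditive D] [HasBinaryBiproducts D]
    [HasShift D ℤ] (T T' : Triangle D) : Triangle D :=
  Triangle.mk (biprod.map T.mor₁ T'.mor₁) (biprod.map T.mor₂ T'.mor₂)
    (biprod.desc (T.mor₃ ≫ (biprod.inl : T.obj₁ ⟶ T.obj₁ ⊞ T'.obj₁)⟦(1:ℤ)⟧')
      (T'.mor₃ ≫ (biprod.inr : T'.obj₁ ⟶ T.obj₁ ⊞ T'.obj₁)⟦(1:ℤ)⟧'))

variable (C)

/-- The class `Θ̃` of triangles of `Karoubi C`: a triangle `T` belongs to `Θ̃` if there is a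
triangle `T'` of `Karoubi C` such that `T ⊕ T'` is isomorphic to the image under
`(toKaroubi C).mapTriangle` of a distinguished triangle of `C`. -/
noncomputable def thetaTilde : Set (Triangle (Karoubi C)) :=
  {T | ∃ (T' : Triangle (Karoubi C)) (S : Triangle C),
    (S ∈ distTriang C) ∧ Nonempty (triangleSum T T' ≅ (toKaroubi C).mapTriangle.obj S)}


section AuxLemmas

variable {D : Type*} [Category D] [Preadditive D] [HasBinaryBiproducts D]
  [HasShift D ℤ] [∀ n : ℤ, (shiftFunctor D n).Additive]

/-- Additive functors preserve binary biproducts, by hand. -/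
@[simps]
noncomputable def myMapBiprod (F : D ⥤ D) [F.Additive] (X Y : D) :
    F.obj (X ⊞ Y) ≅ F.obj X ⊞ F.obj Y where
  hom := biprod.lift (F.map biprod.fst) (F.map biprod.snd)
  inv := biprod.desc (F.map biprod.inl) (F.map biprod.inr)
  hom_inv_id := by
    rw [biprod.lift_desc, ← F.map_comp, ← F.map_comp, ← F.map_add, biprod.total, F.map_id]
  inv_hom_id := by ext <;> simp [← F.map_comp]

/-- `triangleSum` is compatible with isomorphisms in both arguments. -/
noncomputable def triangleSumIso {T U T' U' : Triangle D} (e : T ≅ U) (e' : T' ≅ U') :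
    triangleSum T T' ≅ triangleSum U U' :=
  Triangle.isoMk _ _
    (biprod.mapIso (Triangle.π₁.mapIso e) (Triangle.π₁.mapIso e'))
    (biprod.mapIso (Triangle.π₂.mapIso e) (Triangle.π₂.mapIso e'))
    (biprod.mapIso (Triangle.π₃.mapIso e) (Triangle.π₃.mapIso e'))
    (by
      have h : biprod.map T.mor₁ T'.mor₁ ≫ biprod.map e.hom.hom₂ e'.hom.hom₂ =
          biprod.map e.hom.hom₁ e'.hom.hom₁ ≫ biprod.map U.mor₁ U'.mor₁ := by ext <;> simp
      exact h)
    (by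
      have h : biprod.map T.mor₂ T'.mor₂ ≫ biprod.map e.hom.hom₃ e'.hom.hom₃ =
          biprod.map e.hom.hom₂ e'.hom.hom₂ ≫ biprod.map U.mor₂ U'.mor₂ := by ext <;> simp
      exact h)
    (by
      have h : biprod.desc (T.mor₃ ≫ (biprod.inl : T.obj₁ ⟶ T.obj₁ ⊞ T'.obj₁)⟦(1:ℤ)⟧')
            (T'.mor₃ ≫ (biprod.inr : T'.obj₁ ⟶ T.obj₁ ⊞ T'.obj₁)⟦(1:ℤ)⟧') ≫
            (shiftFunctor D (1:ℤ)).map (biprod.map e.hom.hom₁ e'.hom.hom₁) =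
          biprod.map e.hom.hom₃ e'.hom.hom₃ ≫
            biprod.desc (U.mor₃ ≫ (biprod.inl : U.obj₁ ⟶ U.obj₁ ⊞ U'.obj₁)⟦(1:ℤ)⟧')
              (U'.mor₃ ≫ (biprod.inr : U'.obj₁ ⟶ U.obj₁ ⊞ U'.obj₁)⟦(1:ℤ)⟧') := by
        ext
        · rw [biprod.inl_desc_assoc, biprod.inl_map_assoc, biprod.inl_desc,
            Category.assoc, ← Functor.map_comp, biprod.inl_map, Functor.map_comp,
            ← Category.assoc, e.hom.comm₃, Category.assoc]
        · rw [biprod.inr_desc_assoc, biprod.inr_map_assoc, biprod.inr_desc,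
            Category.assoc, ← Functor.map_comp, biprod.inr_map, Functor.map_comp,
            ← Category.assoc, e'.hom.comm₃, Category.assoc]
      exact h)

/-- Rotation distributes over direct sums of triangles. -/
noncomputable def rotateTriangleSumIso (T T' : Triangle D) :
    (triangleSum T T').rotate ≅ triangleSum T.rotate T'.rotate :=
  Triangle.isoMk _ _ (Iso.refl _) (Iso.refl _) (myMapBiprod (shiftFunctor D (1:ℤ)) _ _)
    (by dsimp [triangleSum]; simp; exact (Category.comp_id _).trans (Category.id_comp _).symm)
    (by
      have h : biprod.desc (T.mor₃ ≫ (biprod.inl : T.obj₁ ⟶ T.obj₁ ⊞ T'.obj₁)⟦(1:ℤ)⟧')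
            (T'.mor₃ ≫ (biprod.inr : T'.obj₁ ⟶ T.obj₁ ⊞ T'.obj₁)⟦(1:ℤ)⟧') ≫
            biprod.lift ((shiftFunctor D (1:ℤ)).map biprod.fst) ((shiftFunctor D (1:ℤ)).map biprod.snd) =
          𝟙 (T.obj₃ ⊞ T'.obj₃) ≫ biprod.map T.mor₃ T'.mor₃ := by
        ext <;> simp [← Functor.map_comp]
      exact h)
    (by
      have h : (-(shiftFunctor D (1:ℤ)).map (biprod.map T.mor₁ T'.mor₁)) ≫
            (shiftFunctor D (1:ℤ)).map (𝟙 (T.obj₂ ⊞ T'.obj₂)) =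
          biprod.lift ((shiftFunctor D (1:ℤ)).map biprod.fst) ((shiftFunctor D (1:ℤ)).map biprod.snd) ≫
            biprod.desc ((-T.mor₁⟦(1:ℤ)⟧') ≫ (biprod.inl : T.obj₂ ⟶ T.obj₂ ⊞ T'.obj₂)⟦(1:ℤ)⟧')
              ((-T'.mor₁⟦(1:ℤ)⟧') ≫ (biprod.inr : T'.obj₂ ⟶ T.obj₂ ⊞ T'.obj₂)⟦(1:ℤ)⟧') := by
        rw [CategoryTheory.Functor.map_id, Category.comp_id, biprod.lift_desc, biprod.map_eq]
        simp [Functor.map_comp, Preadditive.comp_neg, Preadditive.neg_comp]; abel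
      exact h)

end AuxLemmas

/-- The class `thetaTilde` is stable under isomorphism of triangles. -/
lemma thetaTilde_of_iso {T U : Triangle (Karoubi C)} (e : T ≅ U) (h : U ∈ thetaTilde C) :
    T ∈ thetaTilde C := by
  obtain ⟨T', S, hS, ⟨i⟩⟩ := h
  exact ⟨T', S, hS, ⟨(triangleSumIso e (Iso.refl T')).trans i⟩⟩

/-- A triangle of `Karoubi C` belongs to `Θ̃` if and only if its rotation belongs to `Θ̃`. -/
theorem stmt11 (T : Triangle (Karoubi C)) :
    T ∈ thetaTilde C ↔ T.rotate ∈ thetaTilde C := by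
  constructor
  · rintro ⟨T', S, hS, ⟨i⟩⟩
    refine ⟨T'.rotate, S.rotate, rot_of_distTriang S hS, ⟨?_⟩⟩
    exact (rotateTriangleSumIso T T').symm ≪≫ (rotate (Karoubi C)).mapIso i ≪≫
      ((toKaroubi C).mapTriangleRotateIso).app S
  · rintro ⟨T', S, hS, ⟨i⟩⟩
    refine ⟨T'.invRotate, S.invRotate, inv_rot_of_distTriang S hS, ⟨?_⟩⟩
    have j : (triangleSum T T'.invRotate).rotate ≅ (toKaroubi C).mapTriangle.obj S :=
      rotateTriangleSumIso T T'.invRotate ≪≫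
        triangleSumIso (Iso.refl T.rotate) ((triangleRotation (Karoubi C)).counitIso.app T') ≪≫ i
    exact (triangleRotation (Karoubi C)).unitIso.app (triangleSum T T'.invRotate) ≪≫
      (invRotate (Karoubi C)).mapIso j ≪≫ ((toKaroubi C).mapTriangleInvRotateIso).app S
end

section
/- For every morphism u : X → Y in the idempotent completion Karoubi C, there exist an object Z of Karoubi C and morphisms v : Y → Z and w : Z → X⟦1⟧ such that the triangle (X, Y, Z; u, v, w) belongs to the class Θ̃. -/
open CategoryTheory CategoryTheory.Limits CategoryTheory.Pretriangulated
  CategoryTheory.Idempotents ZeroObject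

private lemma ring_aux {R : Type*} [Ring R] (c : R) (ht : (c ^ 2 - c) * (c ^ 2 - c) = 0) :
    (3 * c ^ 2 - 2 * c ^ 3) * (3 * c ^ 2 - 2 * c ^ 3) = 3 * c ^ 2 - 2 * c ^ 3 := by
  have e1 : c ^ 4 + c ^ 2 - 2 * c ^ 3 = 0 := by rw [← ht]; noncomm_ring
  have h4 : c ^ 4 = 2 * c ^ 3 - c ^ 2 := eq_sub_of_add_eq (sub_eq_zero.mp e1)
  have h5 : c ^ 5 = 3 * c ^ 3 - 2 * c ^ 2 := by
    calc c ^ 5 = c ^ 4 * c := (pow_succ c 4)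
      _ = (2 * c ^ 3 - c ^ 2) * c := by rw [h4]
      _ = 2 * c ^ 4 - c ^ 3 := by noncomm_ring
      _ = 2 * (2 * c ^ 3 - c ^ 2) - c ^ 3 := by rw [h4]
      _ = 3 * c ^ 3 - 2 * c ^ 2 := by noncomm_ring
  have h6 : c ^ 6 = 4 * c ^ 3 - 3 * c ^ 2 := by
    calc c ^ 6 = c ^ 5 * c := (pow_succ c 5)
      _ = (3 * c ^ 3 - 2 * c ^ 2) * c := by rw [h5]
      _ = 3 * c ^ 4 - 2 * c ^ 3 := by noncomm_ring
      _ = 3 * (2 * c ^ 3 - c ^ 2) - 2 * c ^ 3 := by rw [h4]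
      _ = 4 * c ^ 3 - 3 * c ^ 2 := by noncomm_ring
  calc (3 * c ^ 2 - 2 * c ^ 3) * (3 * c ^ 2 - 2 * c ^ 3)
      = 9 * c ^ 4 - 12 * c ^ 5 + 4 * c ^ 6 := by noncomm_ring
    _ = 9 * (2 * c ^ 3 - c ^ 2) - 12 * (3 * c ^ 3 - 2 * c ^ 2) + 4 * (4 * c ^ 3 - 3 * c ^ 2) := by
        rw [h4, h5, h6]
    _ = 3 * c ^ 2 - 2 * c ^ 3 := by noncomm_ring

private lemma idem_aux {D : Type*} [Category D] [Preadditive D] {Z : D} (c : Z ⟶ Z)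
    (ht : (c ≫ c - c) ≫ (c ≫ c - c) = 0) :
    ((3 : ℤ) • (c ≫ c) - (2 : ℤ) • (c ≫ c ≫ c)) ≫
        ((3 : ℤ) • (c ≫ c) - (2 : ℤ) • (c ≫ c ≫ c)) =
      (3 : ℤ) • (c ≫ c) - (2 : ℤ) • (c ≫ c ≫ c) := by
  let cE : End Z := c
  have p2 : cE ^ 2 = c ≫ c := by rw [pow_two]; rfl
  have p3 : cE ^ 3 = c ≫ c ≫ c := by rw [pow_succ, pow_two]; rfl
  have key := ring_aux cE (by rw [End.mul_def, p2]; exact ht)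
  have c3 : ((3 : ℤ) : End Z) = 3 := by norm_num
  have c2 : ((2 : ℤ) : End Z) = 2 := by norm_num
  have s3 : ∀ x : End Z, (3 : ℤ) • x = 3 * x := fun x => by rw [zsmul_eq_mul, c3]
  have s2 : ∀ x : End Z, (2 : ℤ) • x = 2 * x := fun x => by rw [zsmul_eq_mul, c2]
  have main : (3 : ℤ) • (c ≫ c) - (2 : ℤ) • (c ≫ c ≫ c) = 3 * cE ^ 2 - 2 * cE ^ 3 := by
    rw [← p3, ← p2, s3, s2]
  rw [main, ← End.mul_def]
  exact key

private lemma biprod_lift_desc {D : Type*} [Category D] [Preadditive D] [HasBinaryBiproducts D]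
    {W X Y Z : D} (f : W ⟶ X) (g : W ⟶ Y) (h : X ⟶ Z) (i : Y ⟶ Z) :
    biprod.lift f g ≫ biprod.desc h i = f ≫ h + g ≫ i := by
  rw [← Category.id_comp (biprod.desc h i), ← biprod.total]
  simp [Preadditive.add_comp, Preadditive.comp_add]

variable (C : Type*) [Category C] [Preadditive C] [HasZeroObject C] [HasFiniteBiproducts C]
  [HasShift C ℤ] [∀ n : ℤ, (shiftFunctor C n).Additive] [Pretriangulated C]

variable {C}

variable (C)

/-- Every morphism of `Karoubi C` fits into a triangle belonging to the class `Θ̃`. -/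
theorem stmt13 {X Y : Karoubi C} (u : X ⟶ Y) :
    ∃ (Z : Karoubi C) (v : Y ⟶ Z) (w : Z ⟶ X⟦(1:ℤ)⟧),
      Triangle.mk u v w ∈ thetaTilde C := by
  obtain ⟨Z₀, g, h, hS⟩ := Pretriangulated.distinguished_cocone_triangle (u.f : X.X ⟶ Y.X)
  obtain ⟨c, hc₁, hc₂⟩ : ∃ c : Z₀ ⟶ Z₀, g ≫ c = Y.p ≫ g ∧ h ≫ (X.p)⟦(1:ℤ)⟧' = c ≫ h :=
    Pretriangulated.complete_distinguished_triangle_morphism _ _ hS hS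
    X.p Y.p ((Karoubi.comp_p u).trans (Karoubi.p_comp u).symm)
  -- hc₁ : g ≫ c = Y.p ≫ g ; hc₂ : h ≫ X.p⟦1⟧' = c ≫ h
  have hch : c ≫ h = h ≫ (X.p)⟦(1:ℤ)⟧' := hc₂.symm
  have hp1 : (X.p)⟦(1:ℤ)⟧' ≫ (X.p)⟦(1:ℤ)⟧' = (X.p)⟦(1:ℤ)⟧' := by
    rw [← Functor.map_comp, X.idem]
  have hgcc : g ≫ c ≫ c = Y.p ≫ g := by
    rw [← Category.assoc, hc₁, Category.assoc, hc₁, ← Category.assoc, Y.idem]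
  have hgc3 : g ≫ c ≫ c ≫ c = Y.p ≫ g := by
    rw [← Category.assoc, hc₁, Category.assoc, hgcc, ← Category.assoc, Y.idem]
  have hcch : (c ≫ c) ≫ h = h ≫ (X.p)⟦(1:ℤ)⟧' := by
    rw [Category.assoc, hch, ← Category.assoc, hch, Category.assoc, hp1]
  have hc3h : (c ≫ c ≫ c) ≫ h = h ≫ (X.p)⟦(1:ℤ)⟧' := by
    rw [Category.assoc, hcch, ← Category.assoc, hch, Category.assoc, hp1]
  have hgt : g ≫ (c ≫ c - c) = 0 := by rw [Preadditive.comp_sub, hgcc, hc₁, sub_self]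
  have hth : (c ≫ c - c) ≫ h = 0 := by rw [Preadditive.sub_comp, hcch, hch, sub_self]
  obtain ⟨s, hs⟩ : ∃ s : (X.X)⟦(1:ℤ)⟧ ⟶ Z₀, c ≫ c - c = h ≫ s :=
    Pretriangulated.Triangle.yoneda_exact₃ _ hS (c ≫ c - c) hgt
  have ht : (c ≫ c - c) ≫ (c ≫ c - c) = 0 := by
    nth_rewrite 2 [hs]
    rw [← Category.assoc, hth, zero_comp]
  set c' : Z₀ ⟶ Z₀ := (3 : ℤ) • (c ≫ c) - (2 : ℤ) • (c ≫ c ≫ c) with hc'def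
  have hc'idem : c' ≫ c' = c' := by rw [hc'def]; exact idem_aux c ht
  have hgc' : g ≫ c' = Y.p ≫ g := by
    rw [hc'def, Preadditive.comp_sub, Preadditive.comp_zsmul, Preadditive.comp_zsmul,
      hgcc, hgc3, ← sub_smul]
    norm_num
  have hc'h : c' ≫ h = h ≫ (X.p)⟦(1:ℤ)⟧' := by
    rw [hc'def, Preadditive.sub_comp, Preadditive.zsmul_comp, Preadditive.zsmul_comp,
      hcch, hc3h, ← sub_smul]
    norm_num
  have hc'2 : ∀ {W : C} (k : Z₀ ⟶ W), c' ≫ c' ≫ k = c' ≫ k := fun k => by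
    rw [← Category.assoc, hc'idem]
  have hZcidem : (𝟙 Z₀ - c') ≫ (𝟙 Z₀ - c') = 𝟙 Z₀ - c' := by
    simp [Preadditive.sub_comp, Preadditive.comp_sub, hc'idem]
  -- Karoubi objects
  let Z : Karoubi C := ⟨Z₀, c', hc'idem⟩
  let Xc : Karoubi C := ⟨X.X, 𝟙 X.X - X.p, by
    simp [Preadditive.sub_comp, Preadditive.comp_sub]⟩
  let Yc : Karoubi C := ⟨Y.X, 𝟙 Y.X - Y.p, by
    simp [Preadditive.sub_comp, Preadditive.comp_sub]⟩
  let Zc : Karoubi C := ⟨Z₀, 𝟙 Z₀ - c', hZcidem⟩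
  -- triangle maps
  let v : Y ⟶ Z := ⟨Y.p ≫ g, by
    simp only [Z, Category.assoc, hgc', Karoubi.idem_assoc]⟩
  have hwcomm : c' ≫ h = c' ≫ (c' ≫ h) ≫ (X.p)⟦(1:ℤ)⟧' := by
    rw [Category.assoc, ← hc'h, hc'2, hc'2]
  let w : Z ⟶ (X⟦(1:ℤ)⟧) := ⟨c' ≫ h, hwcomm.symm⟩
  have hv'comm : (𝟙 Y.X - Y.p) ≫ g =
      (𝟙 Y.X - Y.p) ≫ ((𝟙 Y.X - Y.p) ≫ g) ≫ (𝟙 Z₀ - c') := by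
    simp [Preadditive.sub_comp, Preadditive.comp_sub, hgc']
  let v' : Yc ⟶ Zc := ⟨(𝟙 Y.X - Y.p) ≫ g, hv'comm.symm⟩
  have hhXc : h ≫ (𝟙 X.X - X.p)⟦(1:ℤ)⟧' = (𝟙 Z₀ - c') ≫ h := by
    rw [Functor.map_sub, CategoryTheory.Functor.map_id, Preadditive.comp_sub, Preadditive.sub_comp,
      Category.comp_id, Category.id_comp, hc'h]
  have hw'comm : (𝟙 Z₀ - c') ≫ h =
      (𝟙 Z₀ - c') ≫ ((𝟙 Z₀ - c') ≫ h) ≫ (𝟙 X.X - X.p)⟦(1:ℤ)⟧' := by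
    rw [Category.assoc, hhXc, ← Category.assoc (𝟙 Z₀ - c'), hZcidem, ← Category.assoc, hZcidem]
  let w' : Zc ⟶ (Xc⟦(1:ℤ)⟧) := ⟨(𝟙 Z₀ - c') ≫ h, hw'comm.symm⟩
  let T' : Triangle (Karoubi C) := Triangle.mk (0 : Xc ⟶ Yc) v' w'
  -- inclusions and projections
  let iX : X ⟶ (toKaroubi C).obj X.X := ⟨X.p, by simp [Xc, Yc, Z, Zc]⟩
  let pX : (toKaroubi C).obj X.X ⟶ X := ⟨X.p, by simp [Xc, Yc, Z, Zc]⟩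
  let iXc : Xc ⟶ (toKaroubi C).obj X.X := ⟨𝟙 X.X - X.p, by
    simp [Xc, Yc, Z, Zc, Preadditive.sub_comp, Preadditive.comp_sub]⟩
  let pXc : (toKaroubi C).obj X.X ⟶ Xc := ⟨𝟙 X.X - X.p, by
    simp [Xc, Yc, Z, Zc, Preadditive.sub_comp, Preadditive.comp_sub]⟩
  let iY : Y ⟶ (toKaroubi C).obj Y.X := ⟨Y.p, by simp [Xc, Yc, Z, Zc]⟩
  let pY : (toKaroubi C).obj Y.X ⟶ Y := ⟨Y.p, by simp [Xc, Yc, Z, Zc]⟩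
  let iYc : Yc ⟶ (toKaroubi C).obj Y.X := ⟨𝟙 Y.X - Y.p, by
    simp [Xc, Yc, Z, Zc, Preadditive.sub_comp, Preadditive.comp_sub]⟩
  let pYc : (toKaroubi C).obj Y.X ⟶ Yc := ⟨𝟙 Y.X - Y.p, by
    simp [Xc, Yc, Z, Zc, Preadditive.sub_comp, Preadditive.comp_sub]⟩
  let iZ : Z ⟶ (toKaroubi C).obj Z₀ := ⟨c', by simp [Xc, Yc, Z, Zc, hc'idem]⟩
  let pZ : (toKaroubi C).obj Z₀ ⟶ Z := ⟨c', by simp [Xc, Yc, Z, Zc, hc'idem]⟩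
  let iZc : Zc ⟶ (toKaroubi C).obj Z₀ := ⟨𝟙 Z₀ - c', by
    simp [Xc, Yc, Z, Zc, Preadditive.sub_comp, Preadditive.comp_sub, hc'idem]⟩
  let pZc : (toKaroubi C).obj Z₀ ⟶ Zc := ⟨𝟙 Z₀ - c', by
    simp [Xc, Yc, Z, Zc, Preadditive.sub_comp, Preadditive.comp_sub, hc'idem]⟩
  -- component identities
  have hcsh : ∀ (A : C), (((toKaroubi C).commShiftIso (1:ℤ)).hom.app A).f
      = 𝟙 ((shiftFunctor C (1:ℤ)).obj A) := fun _ => rfl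
  have hshm : ∀ {P Q : Karoubi C} (κ : P ⟶ Q),
      ((shiftFunctor (Karoubi C) (1:ℤ)).map κ).f = (shiftFunctor C (1:ℤ)).map κ.f :=
    fun _ => rfl
  have hXX : iX ≫ pX = 𝟙 X := by ext; simp [Xc, Yc, Z, Zc, iX, pX]
  have hXXc : iX ≫ pXc = 0 := by ext; simp [Xc, Yc, Z, Zc, iX, pXc, Preadditive.comp_sub]
  have hXcX : iXc ≫ pX = 0 := by ext; simp [Xc, Yc, Z, Zc, iXc, pX, Preadditive.sub_comp]
  have hXcXc : iXc ≫ pXc = 𝟙 Xc := by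
    ext; simp [Xc, Yc, Z, Zc, iXc, pXc, Xc, Preadditive.sub_comp, Preadditive.comp_sub]
  have hXtot : pX ≫ iX + pXc ≫ iXc = 𝟙 ((toKaroubi C).obj X.X) := by
    ext
    simp [Xc, Yc, Z, Zc, pX, iX, pXc, iXc, Preadditive.sub_comp, Preadditive.comp_sub]
  have hYY : iY ≫ pY = 𝟙 Y := by ext; simp [Xc, Yc, Z, Zc, iY, pY]
  have hYYc : iY ≫ pYc = 0 := by ext; simp [Xc, Yc, Z, Zc, iY, pYc, Preadditive.comp_sub]
  have hYcY : iYc ≫ pY = 0 := by ext; simp [Xc, Yc, Z, Zc, iYc, pY, Preadditive.sub_comp]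
  have hYcYc : iYc ≫ pYc = 𝟙 Yc := by
    ext; simp [Xc, Yc, Z, Zc, iYc, pYc, Yc, Preadditive.sub_comp, Preadditive.comp_sub]
  have hYtot : pY ≫ iY + pYc ≫ iYc = 𝟙 ((toKaroubi C).obj Y.X) := by
    ext
    simp [Xc, Yc, Z, Zc, pY, iY, pYc, iYc, Preadditive.sub_comp, Preadditive.comp_sub]
  have hZZ : iZ ≫ pZ = 𝟙 Z := by ext; simp [Xc, Yc, Z, Zc, iZ, pZ, Z, hc'idem]
  have hZZc : iZ ≫ pZc = 0 := by ext; simp [Xc, Yc, Z, Zc, iZ, pZc, Preadditive.comp_sub, hc'idem]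
  have hZcZ : iZc ≫ pZ = 0 := by ext; simp [Xc, Yc, Z, Zc, iZc, pZ, Preadditive.sub_comp, hc'idem]
  have hZcZc : iZc ≫ pZc = 𝟙 Zc := by
    ext; simp [Xc, Yc, Z, Zc, iZc, pZc, Zc, Preadditive.sub_comp, Preadditive.comp_sub, hc'idem]
  have hZtot : pZ ≫ iZ + pZc ≫ iZc = 𝟙 ((toKaroubi C).obj Z₀) := by
    ext
    simp [Xc, Yc, Z, Zc, pZ, iZ, pZc, iZc, Preadditive.sub_comp, Preadditive.comp_sub, hc'idem]
  -- the isomorphisms on objects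
  have hXhi : biprod.desc iX iXc ≫ biprod.lift pX pXc = 𝟙 (X ⊞ Xc) := by
    apply biprod.hom_ext' <;> apply biprod.hom_ext <;>
      simp [hXX, hXXc, hXcX, hXcXc]
  have hXih : biprod.lift pX pXc ≫ biprod.desc iX iXc = 𝟙 ((toKaroubi C).obj X.X) := by
    rw [biprod_lift_desc, hXtot]
  let φ₁ : (X ⊞ Xc) ≅ (toKaroubi C).obj X.X :=
    ⟨biprod.desc iX iXc, biprod.lift pX pXc, hXhi, hXih⟩
  have hYhi : biprod.desc iY iYc ≫ biprod.lift pY pYc = 𝟙 (Y ⊞ Yc) := by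
    apply biprod.hom_ext' <;> apply biprod.hom_ext <;>
      simp [hYY, hYYc, hYcY, hYcYc]
  have hYih : biprod.lift pY pYc ≫ biprod.desc iY iYc = 𝟙 ((toKaroubi C).obj Y.X) := by
    rw [biprod_lift_desc, hYtot]
  let φ₂ : (Y ⊞ Yc) ≅ (toKaroubi C).obj Y.X :=
    ⟨biprod.desc iY iYc, biprod.lift pY pYc, hYhi, hYih⟩
  have hZhi : biprod.desc iZ iZc ≫ biprod.lift pZ pZc = 𝟙 (Z ⊞ Zc) := by
    apply biprod.hom_ext' <;> apply biprod.hom_ext <;>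
      simp [hZZ, hZZc, hZcZ, hZcZc]
  have hZih : biprod.lift pZ pZc ≫ biprod.desc iZ iZc = 𝟙 ((toKaroubi C).obj Z₀) := by
    rw [biprod_lift_desc, hZtot]
  let φ₃ : (Z ⊞ Zc) ≅ (toKaroubi C).obj Z₀ :=
    ⟨biprod.desc iZ iZc, biprod.lift pZ pZc, hZhi, hZih⟩
  -- the commutation of the three squares
  have e1 : u ≫ iY = iX ≫ (toKaroubi C).map u.f := by ext; simp [Xc, Yc, Z, Zc, iX, iY]
  have e2 : (0 : Xc ⟶ Yc) ≫ iYc = iXc ≫ (toKaroubi C).map u.f := by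
    ext; simp [Xc, Yc, Z, Zc, iXc, iYc, Preadditive.sub_comp]
  have e3 : v ≫ iZ = iY ≫ (toKaroubi C).map g := by
    ext; simp [Xc, Yc, Z, Zc, v, iZ, iY, hgc']
  have e4 : v' ≫ iZc = iYc ≫ (toKaroubi C).map g := by
    ext
    simp [Xc, Yc, Z, Zc, v', iZc, iYc, Preadditive.sub_comp, Preadditive.comp_sub, hgc']
  have e5 : w ≫ (shiftFunctor (Karoubi C) (1:ℤ)).map iX =
      iZ ≫ ((toKaroubi C).map h ≫ ((toKaroubi C).commShiftIso (1:ℤ)).hom.app X.X) := by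
    ext
    simp only [Karoubi.comp_f, hshm, hcsh, toKaroubi_map_f, w, iX, iZ]
    simp
    exact (by rw [Category.comp_id, Category.assoc, ← hc'h, hc'2] :
      (c' ≫ h) ≫ (X.p)⟦(1:ℤ)⟧' = c' ≫ h ≫ 𝟙 _)
  have e6 : w' ≫ (shiftFunctor (Karoubi C) (1:ℤ)).map iXc =
      iZc ≫ ((toKaroubi C).map h ≫ ((toKaroubi C).commShiftIso (1:ℤ)).hom.app X.X) := by
    ext
    simp only [Karoubi.comp_f, hshm, hcsh, toKaroubi_map_f, w', iXc, iZc]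
    simp
    exact (by
        simp only [CategoryTheory.Functor.map_id, Category.comp_id, Category.id_comp, Preadditive.comp_sub,
          Preadditive.sub_comp, Category.assoc, ← hc'h, hc'2, sub_self, sub_zero] :
      ((𝟙 Z₀ - c') ≫ h) ≫ ((shiftFunctor C (1:ℤ)).map (𝟙 X.X) - (shiftFunctor C (1:ℤ)).map X.p) =
        𝟙 Z₀ ≫ h ≫ 𝟙 _ - c' ≫ h ≫ 𝟙 _)
  have comm₁ : (triangleSum (Triangle.mk u v w) T').mor₁ ≫ φ₂.hom =
      φ₁.hom ≫ ((toKaroubi C).mapTriangle.obj (Triangle.mk u.f g h)).mor₁ := by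
    dsimp only [triangleSum, T', Triangle.mk, Functor.mapTriangle, φ₁, φ₂]
    apply biprod.hom_ext'
    · rw [biprod.inl_map_assoc, biprod.inl_desc, biprod.inl_desc_assoc]
      exact e1
    · rw [biprod.inr_map_assoc, biprod.inr_desc, biprod.inr_desc_assoc]
      exact e2
  have comm₂ : (triangleSum (Triangle.mk u v w) T').mor₂ ≫ φ₃.hom =
      φ₂.hom ≫ ((toKaroubi C).mapTriangle.obj (Triangle.mk u.f g h)).mor₂ := by
    dsimp only [triangleSum, T', Triangle.mk, Functor.mapTriangle, φ₂, φ₃]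
    apply biprod.hom_ext'
    · rw [biprod.inl_map_assoc, biprod.inl_desc, biprod.inl_desc_assoc]
      exact e3
    · rw [biprod.inr_map_assoc, biprod.inr_desc, biprod.inr_desc_assoc]
      exact e4
  have comm₃ : (triangleSum (Triangle.mk u v w) T').mor₃ ≫
        (shiftFunctor (Karoubi C) (1:ℤ)).map φ₁.hom =
      φ₃.hom ≫ ((toKaroubi C).mapTriangle.obj (Triangle.mk u.f g h)).mor₃ := by
    dsimp only [triangleSum, T', Triangle.mk, Functor.mapTriangle, φ₁, φ₃]
    apply biprod.hom_ext'
    · rw [biprod.inl_desc_assoc, Category.assoc, ← Functor.map_comp, biprod.inl_desc,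
        biprod.inl_desc_assoc]
      exact e5
    · rw [biprod.inr_desc_assoc, Category.assoc, ← Functor.map_comp, biprod.inr_desc,
        biprod.inr_desc_assoc]
      exact e6
  refine ⟨Z, v, w, ?_⟩
  exact ⟨T', Triangle.mk u.f g h, hS,
    ⟨Pretriangulated.Triangle.isoMk _ _ φ₁ φ₂ φ₃ comm₁ comm₂ comm₃⟩⟩
end

section
/- Universal property: let D be an idempotent complete pretriangulated category whose class of distinguished triangles is closed under direct summands of triangles. Let G : Karoubi C → D be an additive functor equipped with a natural isomorphism G(X⟦1⟧) ≅ (G X)⟦1⟧ commuting with the shifts, and suppose that the composite functor toKaroubi ⋙ G sends every distinguished triangle of C to a distinguished triangle of D (using the given natural isomorphism on the third map). Then G sends every triangle in the class Θ̃ to a distinguished triangle of D; that is, G is a triangulated functor from (Karoubi C, Θ̃) to D. -/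
open CategoryTheory CategoryTheory.Limits CategoryTheory.Pretriangulated
  CategoryTheory.Idempotents ZeroObject

variable (C : Type*) [Category C] [Preadditive C] [HasZeroObject C] [HasFiniteBiproducts C]
  [HasShift C ℤ] [∀ n : ℤ, (shiftFunctor C n).Additive] [Pretriangulated C]

variable {C}

variable (C)

lemma map_inl_mapBiprod_hom {E D : Type*} [Category E] [Preadditive E] [Category D]
    [Preadditive D] (G : E ⥤ D) [G.Additive] (X Y : E) [HasBinaryBiproduct X Y]
    [PreservesBinaryBiproduct X Y G] :
    G.map biprod.inl ≫ (G.mapBiprod X Y).hom = biprod.inl := by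
  rw [Functor.mapBiprod_hom]
  ext <;> simp [← G.map_comp]

lemma map_inr_mapBiprod_hom {E D : Type*} [Category E] [Preadditive E] [Category D]
    [Preadditive D] (G : E ⥤ D) [G.Additive] (X Y : E) [HasBinaryBiproduct X Y]
    [PreservesBinaryBiproduct X Y G] :
    G.map biprod.inr ≫ (G.mapBiprod X Y).hom = biprod.inr := by
  rw [Functor.mapBiprod_hom]
  ext <;> simp [← G.map_comp]

noncomputable def mapTriangleSumIso {E D : Type*} [Category E] [Preadditive E]
    [HasBinaryBiproducts E] [HasShift E ℤ] [Category D] [Preadditive D]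
    [HasBinaryBiproducts D] [HasShift D ℤ] [∀ n : ℤ, (shiftFunctor D n).Additive]
    (G : E ⥤ D) [G.Additive] [G.CommShift ℤ] (T T' : Triangle E) :
    G.mapTriangle.obj (triangleSum T T') ≅
      triangleSum (G.mapTriangle.obj T) (G.mapTriangle.obj T') := by
  have : PreservesBinaryBiproducts G := preservesBinaryBiproducts_of_preservesBiproducts G
  refine Triangle.isoMk _ _ (G.mapBiprod _ _) (G.mapBiprod _ _) (G.mapBiprod _ _) ?_ ?_ ?_
  · change G.map (biprod.map T.mor₁ T'.mor₁) ≫ (G.mapBiprod T.obj₂ T'.obj₂).hom =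
      (G.mapBiprod T.obj₁ T'.obj₁).hom ≫ biprod.map (G.map T.mor₁) (G.map T'.mor₁)
    rw [← cancel_epi (G.mapBiprod T.obj₁ T'.obj₁).inv, Iso.inv_hom_id_assoc]
    apply biprod.hom_ext'
    · simp only [triangleSum, Functor.mapBiprod_inv, Functor.mapTriangle_obj,
        Triangle.mk_obj₁, Triangle.mk_obj₂, Triangle.mk_mor₁, biprod.inl_desc_assoc,
        ← G.map_comp_assoc, biprod.inl_map]
      rw [G.map_comp, Category.assoc, map_inl_mapBiprod_hom]
    · simp only [triangleSum, Functor.mapBiprod_inv, Functor.mapTriangle_obj,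
        Triangle.mk_obj₁, Triangle.mk_obj₂, Triangle.mk_mor₁, biprod.inr_desc_assoc,
        ← G.map_comp_assoc, biprod.inr_map]
      rw [G.map_comp, Category.assoc, map_inr_mapBiprod_hom]
  · change G.map (biprod.map T.mor₂ T'.mor₂) ≫ (G.mapBiprod T.obj₃ T'.obj₃).hom =
      (G.mapBiprod T.obj₂ T'.obj₂).hom ≫ biprod.map (G.map T.mor₂) (G.map T'.mor₂)
    rw [← cancel_epi (G.mapBiprod T.obj₂ T'.obj₂).inv, Iso.inv_hom_id_assoc]
    apply biprod.hom_ext'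
    · simp only [triangleSum, Functor.mapBiprod_inv, Functor.mapTriangle_obj,
        Triangle.mk_obj₂, Triangle.mk_obj₃, Triangle.mk_mor₂, biprod.inl_desc_assoc,
        ← G.map_comp_assoc, biprod.inl_map]
      rw [G.map_comp, Category.assoc, map_inl_mapBiprod_hom]
    · simp only [triangleSum, Functor.mapBiprod_inv, Functor.mapTriangle_obj,
        Triangle.mk_obj₂, Triangle.mk_obj₃, Triangle.mk_mor₂, biprod.inr_desc_assoc,
        ← G.map_comp_assoc, biprod.inr_map]
      rw [G.map_comp, Category.assoc, map_inr_mapBiprod_hom]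
  · change (G.map (biprod.desc (T.mor₃ ≫ (biprod.inl : T.obj₁ ⟶ T.obj₁ ⊞ T'.obj₁)⟦(1:ℤ)⟧')
        (T'.mor₃ ≫ (biprod.inr : T'.obj₁ ⟶ T.obj₁ ⊞ T'.obj₁)⟦(1:ℤ)⟧')) ≫
        (G.commShiftIso (1:ℤ)).hom.app (T.obj₁ ⊞ T'.obj₁)) ≫
        (shiftFunctor D (1:ℤ)).map (G.mapBiprod T.obj₁ T'.obj₁).hom =
      (G.mapBiprod T.obj₃ T'.obj₃).hom ≫ biprod.desc
        ((G.map T.mor₃ ≫ (G.commShiftIso (1:ℤ)).hom.app T.obj₁) ≫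
          (biprod.inl : G.obj T.obj₁ ⟶ G.obj T.obj₁ ⊞ G.obj T'.obj₁)⟦(1:ℤ)⟧')
        ((G.map T'.mor₃ ≫ (G.commShiftIso (1:ℤ)).hom.app T'.obj₁) ≫
          (biprod.inr : G.obj T'.obj₁ ⟶ G.obj T.obj₁ ⊞ G.obj T'.obj₁)⟦(1:ℤ)⟧')
    rw [← cancel_epi (G.mapBiprod T.obj₃ T'.obj₃).inv, Iso.inv_hom_id_assoc]
    ext
    · simp only [triangleSum, Functor.mapBiprod_inv, Functor.mapTriangle_obj,
        Triangle.mk_obj₁, Triangle.mk_obj₃, Triangle.mk_mor₃, biprod.inl_desc_assoc,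
        biprod.inl_desc]
      simp only [← Category.assoc]
      rw [← G.map_comp, biprod.inl_desc, G.map_comp]
      simp only [Category.assoc, Functor.commShiftIso_hom_naturality_assoc]
      rw [← (shiftFunctor D (1:ℤ)).map_comp, map_inl_mapBiprod_hom]
    · simp only [triangleSum, Functor.mapBiprod_inv, Functor.mapTriangle_obj,
        Triangle.mk_obj₁, Triangle.mk_obj₃, Triangle.mk_mor₃, biprod.inr_desc_assoc,
        biprod.inr_desc]
      simp only [← Category.assoc]
      rw [← G.map_comp, biprod.inr_desc, G.map_comp]
      simp only [Category.assoc, Functor.commShiftIso_hom_naturality_assoc]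
      rw [← (shiftFunctor D (1:ℤ)).map_comp, map_inr_mapBiprod_hom]

/-- Universal property: let `D` be an idempotent complete pretriangulated category whose
distinguished triangles are closed under direct summands, and let `G : Karoubi C ⥤ D` be an
additive functor commuting with the shifts such that `toKaroubi C ⋙ G` sends distinguished
triangles of `C` to distinguished triangles of `D`. Then `G` sends every triangle of the
class `Θ̃` to a distinguished triangle of `D`. -/
theorem stmt16 {D : Type*} [Category D] [Preadditive D] [HasZeroObject D]
    [HasBinaryBiproducts D] [HasShift D ℤ] [∀ n : ℤ, (shiftFunctor D n).Additive]
    [Pretriangulated D] [IsIdempotentComplete D]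
    (hsummand : ∀ T T' : Triangle D, (triangleSum T T' ∈ distTriang D) → T ∈ distTriang D)
    (G : Karoubi C ⥤ D) [G.Additive] [G.CommShift ℤ]
    (himage : ∀ S : Triangle C, (S ∈ distTriang C) →
      G.mapTriangle.obj ((toKaroubi C).mapTriangle.obj S) ∈ distTriang D)
    (T : Triangle (Karoubi C)) (hT : T ∈ thetaTilde C) :
    G.mapTriangle.obj T ∈ distTriang D := by
  obtain ⟨T', S, hS, ⟨e⟩⟩ := hT
  have h1 : G.mapTriangle.obj (triangleSum T T') ∈ distTriang D :=
    isomorphic_distinguished _ (himage S hS) _ (G.mapTriangle.mapIso e)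
  exact hsummand _ _ (isomorphic_distinguished _ h1 _ (mapTriangleSumIso G T T').symm)
end
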